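/- Let p be a prime, R a commutative 𝔽_p-algebra, δ a derivation of R, and x ∈ R an element with δ(x) = 1 and x^p = 0. Then the map ∂ : R → R defined by ∂(r) = δ(r) − (−1)^{p−1}·((p−1)!)^{−1}·x^{p−1}·δ^p(r) (where ((p−1)!)^{−1} is the inverse of the image of (p−1)! in 𝔽_p) is a derivation of R satisfying ∂(x) = 1 and ∂^p = 0. -/

import Mathlib

/-- A derivation of a ring: an additive map satisfying the Leibniz rule. -/
def IsDerivation {R : Type*} [Ring R] (δ : R → R) : Prop :=
  (∀ a b : R, δ (a + b) = δ a + δ b) ∧ (∀ a b : R, δ (a * b) = δ a * b + a * δ b)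

namespace DerAux

variable {R : Type*} [CommRing R] {δ : R → R}

lemma map_sum' {ι : Type*} {f : R → R} (h0 : f 0 = 0)
    (hadd : ∀ a b, f (a + b) = f a + f b) (s : Finset ι) (g : ι → R) :
    f (∑ i ∈ s, g i) = ∑ i ∈ s, f (g i) := by
  classical
  induction s using Finset.induction with
  | empty => simpa
  | insert a s' hx ih => rw [Finset.sum_insert hx, hadd, ih, Finset.sum_insert hx]

lemma d_zero (h : IsDerivation δ) : δ 0 = 0 := by
  have h0 := h.1 0 0
  rw [add_zero] at h0
  exact (left_eq_add.mp h0)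

lemma d_one (h : IsDerivation δ) : δ 1 = 0 := by
  have h0 := h.2 1 1
  rw [mul_one, one_mul, mul_one] at h0
  exact (left_eq_add.mp h0)

lemma d_neg (h : IsDerivation δ) (a : R) : δ (-a) = -δ a := by
  have h0 := h.1 a (-a)
  rw [add_neg_cancel, d_zero h] at h0
  exact (neg_eq_of_add_eq_zero_right h0.symm).symm

lemma d_sub (h : IsDerivation δ) (a b : R) : δ (a - b) = δ a - δ b := by
  rw [sub_eq_add_neg, h.1, d_neg h, sub_eq_add_neg]

lemma d_natCast (h : IsDerivation δ) (n : ℕ) : δ (n : R) = 0 := by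
  induction n with
  | zero => simpa using d_zero h
  | succ n ih => rw [Nat.cast_succ, h.1, ih, d_one h, add_zero]

lemma d_const_mul (h : IsDerivation δ) {c : R} (hc : δ c = 0) (y : R) :
    δ (c * y) = c * δ y := by rw [h.2, hc, zero_mul, zero_add]

lemma iter_zero (h : IsDerivation δ) (n : ℕ) : δ^[n] 0 = 0 := by
  induction n with
  | zero => rfl
  | succ n ih => rw [Function.iterate_succ_apply', ih, d_zero h]

lemma iter_add (h : IsDerivation δ) (n : ℕ) (a b : R) :
    δ^[n] (a + b) = δ^[n] a + δ^[n] b := by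
  induction n generalizing a b with
  | zero => rfl
  | succ n ih => rw [Function.iterate_succ_apply', ih, h.1,
      Function.iterate_succ_apply', Function.iterate_succ_apply']

lemma iter_neg (h : IsDerivation δ) (n : ℕ) (a : R) : δ^[n] (-a) = -δ^[n] a := by
  induction n generalizing a with
  | zero => rfl
  | succ n ih => rw [Function.iterate_succ_apply', ih, d_neg h,
      Function.iterate_succ_apply']

lemma iter_sub (h : IsDerivation δ) (n : ℕ) (a b : R) :
    δ^[n] (a - b) = δ^[n] a - δ^[n] b := by
  induction n generalizing a b with
  | zero => rfl
  | succ n ih => rw [Function.iterate_succ_apply', ih, d_sub h,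
      Function.iterate_succ_apply', Function.iterate_succ_apply']

lemma iter_const_mul (h : IsDerivation δ) {c : R} (hc : δ c = 0) (n : ℕ) (y : R) :
    δ^[n] (c * y) = c * δ^[n] y := by
  induction n generalizing y with
  | zero => rfl
  | succ n ih => rw [Function.iterate_succ_apply', ih, d_const_mul h hc,
      Function.iterate_succ_apply']

lemma d_pow (h : IsDerivation δ) (x : R) (n : ℕ) :
    δ (x ^ (n + 1)) = (n + 1 : ℕ) * x ^ n * δ x := by
  induction n with
  | zero => simp
  | succ n ih =>
    rw [pow_succ, h.2, ih]
    push_cast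
    ring

lemma leibniz_iter (h : IsDerivation δ) (n : ℕ) (a b : R) :
    δ^[n] (a * b) = ∑ k ∈ Finset.range (n + 1),
      (n.choose k : R) * (δ^[k] a * δ^[n - k] b) := by
  induction n with
  | zero => simp
  | succ n ih =>
    rw [Function.iterate_succ_apply', ih, map_sum' (d_zero h) h.1]
    have hterm : ∀ k ∈ Finset.range (n + 1),
        δ ((n.choose k : R) * (δ^[k] a * δ^[n - k] b))
          = (n.choose k : R) * (δ^[k + 1] a * δ^[n - k] b)
            + (n.choose k : R) * (δ^[k] a * δ^[(n - k) + 1] b) := by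
      intro k _
      rw [d_const_mul h (d_natCast h _), h.2, mul_add,
        Function.iterate_succ_apply' δ k a, Function.iterate_succ_apply' δ (n - k) b]
    rw [Finset.sum_congr rfl hterm, Finset.sum_add_distrib]
    have e1 : ∀ k ∈ Finset.range (n + 1),
        ((n + 1).choose (k + 1) : R) * (δ^[k + 1] a * δ^[n + 1 - (k + 1)] b)
        = (n.choose k : R) * (δ^[k + 1] a * δ^[n - k] b)
          + (n.choose (k + 1) : R) * (δ^[k + 1] a * δ^[n - k] b) := by
      intro k _
      rw [Nat.choose_succ_succ, Nat.succ_sub_succ, Nat.cast_add, add_mul]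
    rw [Finset.sum_range_succ' _ (n + 1), Finset.sum_congr rfl e1, Finset.sum_add_distrib]
    have e2 : ∑ k ∈ Finset.range (n + 1), (n.choose k : R) * (δ^[k] a * δ^[n - k + 1] b)
        = (∑ k ∈ Finset.range (n + 1),
            (n.choose (k + 1) : R) * (δ^[k + 1] a * δ^[n - k] b))
          + (n.choose 0 : R) * (δ^[0] a * δ^[n - 0 + 1] b) := by
      rw [Finset.sum_range_succ' _ n, Finset.sum_range_succ
        (fun k => (n.choose (k + 1) : R) * (δ^[k + 1] a * δ^[n - k] b)) n]
      have h3 : ∀ k ∈ Finset.range n,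
          (n.choose (k + 1) : R) * (δ^[k + 1] a * δ^[n - (k + 1) + 1] b)
          = (n.choose (k + 1) : R) * (δ^[k + 1] a * δ^[n - k] b) := by
        intro k hk
        have hk' : k < n := Finset.mem_range.mp hk
        have h4 : n - (k + 1) + 1 = n - k := by omega
        rw [h4]
      rw [Finset.sum_congr rfl h3, Nat.choose_succ_self, Nat.cast_zero, zero_mul, add_zero]
    rw [e2]
    simp only [Nat.choose_zero_right, Nat.cast_one, one_mul, Function.iterate_zero_apply,
      Nat.sub_zero, Nat.add_sub_cancel_left]
    ring

end DerAux

open DerAux Finset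

theorem stmt1 {R : Type*} [CommRing R] (p : ℕ) (hp : p.Prime) [CharP R p]
    (δ : R → R) (hδ : IsDerivation δ) (x : R) (hx1 : δ x = 1) (hxp : x ^ p = 0) :
    ∀ D : R → R,
      (∀ r : R, D r = δ r - (-1 : R) ^ (p - 1) *
          (ZMod.castHom (dvd_refl p) R (((p - 1).factorial : ZMod p)⁻¹)) *
          x ^ (p - 1) * (δ^[p] r)) →
      IsDerivation D ∧ D x = 1 ∧ ∀ r : R, D^[p] r = 0 := by
  classical
  intro D hD
  haveI : Fact p.Prime := ⟨hp⟩
  have hp2 : 2 ≤ p := hp.two_le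
  -- the scalar is -1
  have hwil : (((p - 1).factorial : ZMod p)) = -1 := ZMod.wilsons_lemma p
  have hcR : (ZMod.castHom (dvd_refl p) R) (((p - 1).factorial : ZMod p)⁻¹) = -1 := by
    rw [hwil, inv_neg_one, map_neg, map_one]
  have hone : ((-1 : R)) ^ (p - 1) = 1 := by
    rcases hp.eq_two_or_odd' with h2 | hodd
    · subst h2
      have h20 : (2 : R) = 0 := by exact_mod_cast CharP.cast_eq_zero R 2
      have : (-1 : R) = 1 := by linear_combination -h20
      rw [this, one_pow]
    · exact (Nat.Odd.sub_odd hodd odd_one).neg_one_pow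
  -- the full coefficient in D equals -1
  have hcoef : (-1 : R) ^ (p - 1) *
      (ZMod.castHom (dvd_refl p) R) (((p - 1).factorial : ZMod p)⁻¹) = -1 := by
    rw [hcR, hone, one_mul]
  -- (p-1)! = -1 in R
  have hfactR : (((p - 1).factorial : ℕ) : R) = -1 := by
    have h5 := map_natCast (ZMod.castHom (dvd_refl p) R) ((p - 1).factorial)
    rw [hwil, map_neg, map_one] at h5
    exact h5.symm
  -- abbreviations
  set Nf : R → R := fun r => -(x ^ (p - 1) * δ^[p] r) with hNf
  have hNfapp : ∀ r, Nf r = -(x ^ (p - 1) * δ^[p] r) := fun r => rfl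
  have hDN : ∀ r, D r = δ r - Nf r := by
    intro r
    rw [hD r, hNfapp, hcoef]
    ring
  -- basic vanishing facts
  have hδ1 : ∀ k, 1 ≤ k → δ^[k] (1 : R) = 0 := by
    intro k hk
    obtain ⟨j, rfl⟩ : ∃ j, k = j + 1 := ⟨k - 1, by omega⟩
    rw [Function.iterate_succ_apply, d_one hδ, iter_zero hδ]
  have hEx : δ^[p] x = 0 := by
    obtain ⟨j, hj⟩ : ∃ j, p = j + 1 := ⟨p - 1, by omega⟩
    rw [hj, Function.iterate_succ_apply, hx1]
    exact hδ1 j (by omega)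
  have hE_mul : ∀ a b : R, δ^[p] (a * b) = δ^[p] a * b + a * δ^[p] b := by
    intro a b
    rw [leibniz_iter hδ p a b, Finset.sum_range_succ]
    have hmid : ∑ k ∈ Finset.range p, (p.choose k : R) * (δ^[k] a * δ^[p - k] b)
        = a * δ^[p] b := by
      rw [Finset.sum_eq_single_of_mem 0 (Finset.mem_range.mpr (by omega))]
      · simp
      · intro k hk hk0
        have hkp : k < p := Finset.mem_range.mp hk
        have : ((p.choose k : ℕ) : R) = 0 :=
          (CharP.cast_eq_zero_iff R p _).mpr (hp.dvd_choose_self hk0 hkp)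
        rw [this, zero_mul]
    rw [hmid, Nat.choose_self, Nat.cast_one, one_mul, Nat.sub_self,
      Function.iterate_zero_apply]
    ring
  have hEpow : ∀ k : ℕ, δ^[p] (x ^ k) = 0 := by
    intro k
    induction k with
    | zero => rw [pow_zero]; exact hδ1 p (by omega)
    | succ k ih => rw [pow_succ, hE_mul, ih, hEx, zero_mul, mul_zero, add_zero]
  -- derivative powers of x^(p-1)
  have hdw : ∀ m, m ≤ p - 1 →
      δ^[m] (x ^ (p - 1)) = (((p - 1).descFactorial m : ℕ) : R) * x ^ (p - 1 - m) := by
    intro m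
    induction m with
    | zero => intro _; simp
    | succ m ih =>
      intro hm
      have hm' : m ≤ p - 1 := by omega
      rw [Function.iterate_succ_apply', ih hm', d_const_mul hδ (d_natCast hδ _)]
      have hsub : p - 1 - m = (p - 2 - m) + 1 := by omega
      rw [hsub, d_pow hδ, hx1, mul_one, Nat.descFactorial_succ]
      have hsub2 : p - 1 - (m + 1) = p - 2 - m := by omega
      rw [hsub2]
      push_cast [hsub]
      ring
  -- x^(p-1) * x^(p-1-m) = 0 for m ≤ p-2
  have hw0 : ∀ m, m ≤ p - 2 → x ^ (p - 1) * x ^ (p - 1 - m) = 0 := by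
    intro m hm
    rw [← pow_add]
    have h6 : p - 1 + (p - 1 - m) = p + (p - 2 - m) := by omega
    rw [h6, pow_add, hxp, zero_mul]
  -- Nf is additive and kills 0
  have hNadd : ∀ a b, Nf (a + b) = Nf a + Nf b := by
    intro a b
    rw [hNfapp, hNfapp, hNfapp, iter_add hδ]
    ring
  have hNzero : Nf 0 = 0 := by rw [hNfapp, iter_zero hδ, mul_zero, neg_zero]
  have hNsub : ∀ a b, Nf (a - b) = Nf a - Nf b := by
    intro a b
    rw [hNfapp, hNfapp, hNfapp, iter_sub hδ]
    ring
  -- expansion of δ^[i] (Nf s)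
  have hexp : ∀ i, i ≤ p - 1 → ∀ s : R,
      δ^[i] (Nf s) = -∑ m ∈ Finset.range (i + 1),
        (i.choose m : R) * ((((p - 1).descFactorial m : ℕ) : R)
          * (x ^ (p - 1 - m) * δ^[i - m] (δ^[p] s))) := by
    intro i hi s
    rw [hNfapp, iter_neg hδ, leibniz_iter hδ i _ (δ^[p] s), neg_inj]
    refine Finset.sum_congr rfl ?_
    intro m hm
    have hmi : m ≤ i := by have := Finset.mem_range.mp hm; omega
    have hm' : m ≤ p - 1 := le_trans hmi hi
    rw [hdw m hm']
    ring
  -- key vanishing: N δ^i N = 0 for i ≤ p-2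
  have hNdN : ∀ i, i ≤ p - 2 → ∀ s : R, Nf (δ^[i] (Nf s)) = 0 := by
    intro i hi s
    rw [hexp i (by omega) s, hNfapp, iter_neg hδ,
      map_sum' (iter_zero hδ p) (iter_add hδ p), mul_neg, neg_neg, Finset.mul_sum]
    apply Finset.sum_eq_zero
    intro m hm
    have hmi : m ≤ i := by have := Finset.mem_range.mp hm; omega
    rw [iter_const_mul hδ (d_natCast hδ _), iter_const_mul hδ (d_natCast hδ _),
      hE_mul, hEpow]
    have h7 := hw0 m (by omega)
    linear_combination ((i.choose m : R) * ((((p - 1).descFactorial m : ℕ) : R)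
      * δ^[p] (δ^[i - m] (δ^[p] s)))) * h7
  -- main expansion of D^[k]
  have main : ∀ k, 1 ≤ k → k ≤ p → ∀ r : R,
      D^[k] r = δ^[k] r - ∑ i ∈ Finset.range k, δ^[i] (Nf (δ^[k - 1 - i] r)) := by
    intro k
    induction k with
    | zero => intro h; omega
    | succ k ih =>
      intro _ hk1 r
      rcases Nat.eq_zero_or_pos k with hk0 | hkpos
      · subst hk0
        simp only [zero_add, Function.iterate_one, Finset.sum_range_one,
          Function.iterate_zero_apply, Nat.sub_self, Nat.sub_zero]
        exact hDN r
      · rw [Function.iterate_succ_apply' D k r, ih (by omega) (by omega) r, hDN,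
          d_sub hδ, hNsub, map_sum' (d_zero hδ) hδ.1, map_sum' hNzero hNadd]
        have hzero : ∑ i ∈ Finset.range k, Nf (δ^[i] (Nf (δ^[k - 1 - i] r))) = 0 := by
          apply Finset.sum_eq_zero
          intro i hi
          exact hNdN i (by have := Finset.mem_range.mp hi; omega) _
        rw [hzero, sub_zero]
        simp only [Nat.add_sub_cancel]
        rw [Finset.sum_range_succ' (fun i => δ^[i] (Nf (δ^[k - i] r))) k]
        have hre : ∀ i ∈ Finset.range k,
            δ^[i + 1] (Nf (δ^[k - (i + 1)] r)) = δ (δ^[i] (Nf (δ^[k - 1 - i] r))) := by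
          intro i hi
          have h8 : k - (i + 1) = k - 1 - i := by omega
          rw [h8, Function.iterate_succ_apply']
        rw [Finset.sum_congr rfl hre, ← Function.iterate_succ_apply' δ k r]
        simp only [Function.iterate_zero_apply, Nat.sub_zero]
        ring
  -- the total single-N sum equals δ^[p]
  have hsum : ∀ r : R, ∑ i ∈ Finset.range p, δ^[i] (Nf (δ^[p - 1 - i] r)) = δ^[p] r := by
    intro r
    have hstep : ∀ i ∈ Finset.range p,
        δ^[i] (Nf (δ^[p - 1 - i] r))
          = -∑ m ∈ Finset.range (i + 1), (i.choose m : R)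
              * ((((p - 1).descFactorial m : ℕ) : R)
                * (x ^ (p - 1 - m) * δ^[p - 1 - m] (δ^[p] r))) := by
      intro i hi
      have hip : i ≤ p - 1 := by have := Finset.mem_range.mp hi; omega
      rw [hexp i hip, neg_inj]
      refine Finset.sum_congr rfl ?_
      intro m hm
      have hmi : m ≤ i := by have := Finset.mem_range.mp hm; omega
      have h9 : δ^[i - m] (δ^[p] (δ^[p - 1 - i] r)) = δ^[p - 1 - m] (δ^[p] r) := by
        rw [← Function.iterate_add_apply, ← Function.iterate_add_apply,
          ← Function.iterate_add_apply]
        congr 1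
        omega
      rw [h9]
    rw [Finset.sum_congr rfl hstep, Finset.sum_neg_distrib]
    have hdouble : ∑ i ∈ Finset.range p, ∑ m ∈ Finset.range (i + 1),
        (i.choose m : R) * ((((p - 1).descFactorial m : ℕ) : R)
          * (x ^ (p - 1 - m) * δ^[p - 1 - m] (δ^[p] r))) = -δ^[p] r := by
      have hswap : ∑ i ∈ Finset.range p, ∑ m ∈ Finset.range (i + 1),
          (i.choose m : R) * ((((p - 1).descFactorial m : ℕ) : R)
            * (x ^ (p - 1 - m) * δ^[p - 1 - m] (δ^[p] r)))
          = ∑ m ∈ Finset.range p, ∑ i ∈ Finset.Ico m p,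
            (i.choose m : R) * ((((p - 1).descFactorial m : ℕ) : R)
              * (x ^ (p - 1 - m) * δ^[p - 1 - m] (δ^[p] r))) := by
        simp_rw [Finset.range_eq_Ico]
        exact (Finset.sum_Ico_Ico_comm 0 p (fun m i =>
          (i.choose m : R) * ((((p - 1).descFactorial m : ℕ) : R)
            * (x ^ (p - 1 - m) * δ^[p - 1 - m] (δ^[p] r))))).symm
      rw [hswap]
      have hinner : ∀ m ∈ Finset.range p,
          ∑ i ∈ Finset.Ico m p, (i.choose m : R)
            * ((((p - 1).descFactorial m : ℕ) : R)
              * (x ^ (p - 1 - m) * δ^[p - 1 - m] (δ^[p] r)))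
          = ((p.choose (m + 1) : ℕ) : R)
            * ((((p - 1).descFactorial m : ℕ) : R)
              * (x ^ (p - 1 - m) * δ^[p - 1 - m] (δ^[p] r))) := by
        intro m hm
        rw [← Finset.sum_mul, ← Nat.cast_sum]
        have h11 : Finset.Ico m p = Finset.Icc m (p - 1) := by
          rw [← Finset.Ico_add_one_right_eq_Icc]
          congr 1
          omega
        rw [h11, Nat.sum_Icc_choose]
        have h12 : p - 1 + 1 = p := by omega
        rw [h12]
      rw [Finset.sum_congr rfl hinner,
        Finset.sum_eq_single_of_mem (p - 1) (Finset.mem_range.mpr (by omega))]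
      · have h10 : p.choose (p - 1 + 1) = 1 := by
          have h12 : p - 1 + 1 = p := by omega
          rw [h12, Nat.choose_self]
        rw [h10, Nat.cast_one, one_mul, Nat.descFactorial_self, Nat.sub_self, pow_zero,
          Function.iterate_zero_apply, hfactR]
        ring
      · intro m hm hmne
        have hmlt : m < p := Finset.mem_range.mp hm
        have h13 : ((p.choose (m + 1) : ℕ) : R) = 0 :=
          (CharP.cast_eq_zero_iff R p _).mpr (hp.dvd_choose_self (by omega) (by omega))
        rw [h13, zero_mul]
    rw [hdouble, neg_neg]
  refine ⟨⟨?_, ?_⟩, ?_, ?_⟩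
  · intro a b
    rw [hDN (a + b), hDN a, hDN b, hδ.1, hNadd]
    ring
  · intro a b
    rw [hDN (a * b), hDN a, hDN b, hδ.2, hNfapp (a * b), hNfapp a, hNfapp b, hE_mul]
    ring
  · rw [hDN, hNfapp, hEx, mul_zero, neg_zero, sub_zero, hx1]
  · intro r
    rw [main p (by omega) (le_refl p) r, hsum r, sub_self]
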